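/- arXiv:1409.2791 — 2 statements merged into one kernel-verified Lean document; each statement's English description precedes it below -/
import Mathlib

section
/- Let g ∈ VMO_ℝ. Then the essential range of g, namely R_g = {λ ∈ ℝ : for every ε > 0 the set {e^{it} ∈ 𝕋 : |g(e^{it}) − λ| < ε} has positive Lebesgue measure}, is a connected subset of ℝ. -/
open MeasureTheory Complex Real Set

noncomputable section

instance : Fact (0 < 2 * π) := ⟨by positivity⟩

/-- The circle `ℝ / 2πℤ`. -/
abbrev 𝕋c : Type := AddCircle (2 * π)

/-- Normalized Haar (Lebesgue) measure on the circle, of total mass 1. -/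
abbrev μT : Measure 𝕋c := AddCircle.haarAddCircle

/-- `f` is (a representative of) an element of `L^∞(𝕋)`:
it is a.e. strongly measurable and essentially bounded. -/
def IsEssBdd (f : 𝕋c → ℂ) : Prop :=
  AEStronglyMeasurable f μT ∧ ∃ C : ℝ, ∀ᵐ t ∂μT, ‖f t‖ ≤ C

/-- `f` is (essentially) real-valued. -/
def RealValued (f : 𝕋c → ℂ) : Prop := ∀ᵐ t ∂μT, (f t).im = 0

/-- The Hardy space `H^∞(𝕋)`: essentially bounded functions whose negative Fourier
coefficients vanish. -/
def MemHinf (f : 𝕋c → ℂ) : Prop :=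
  IsEssBdd f ∧ ∀ n : ℤ, n < 0 → fourierCoeff f n = 0

/-- `f` is a.e. equal to a continuous function on the circle. -/
def MemCT (f : 𝕋c → ℂ) : Prop := ∃ c : C(𝕋c, ℂ), f =ᵐ[μT] ⇑c

/-- The space `H^∞ + C(𝕋)`. -/
def MemHinfC (f : 𝕋c → ℂ) : Prop :=
  ∃ h c : 𝕋c → ℂ, MemHinf h ∧ MemCT c ∧ f =ᵐ[μT] h + c

/-- `f` is invertible in `H^∞ + C(𝕋)`. -/
def MemInvHinfC (f : 𝕋c → ℂ) : Prop :=
  MemHinfC f ∧ ∃ g : 𝕋c → ℂ, MemHinfC g ∧ f * g =ᵐ[μT] 1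

/-- The quasicontinuous functions `QC = (H^∞+C) ∩ conj(H^∞+C)`. -/
def MemQC (f : 𝕋c → ℂ) : Prop :=
  MemHinfC f ∧ MemHinfC (fun t => starRingEnd ℂ (f t))

/-- Real-valued quasicontinuous functions, `QC_ℝ`. -/
def MemQCR (f : 𝕋c → ℂ) : Prop := MemQC f ∧ RealValued f

/-- `𝓘`: invertible elements of `QC`. -/
def MemInvQC (f : 𝕋c → ℂ) : Prop :=
  MemQC f ∧ ∃ g : 𝕋c → ℂ, MemQC g ∧ f * g =ᵐ[μT] 1

/-- The average of `f` over the arc corresponding to the interval `[a,b]`. -/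
def arcAvg (f : 𝕋c → ℂ) (a b : ℝ) : ℂ := (b - a)⁻¹ • ∫ t in a..b, f (t : 𝕋c)

/-- The (quadratic) mean oscillation of `f` over the arc corresponding to `[a,b]`. -/
def meanOsc (f : 𝕋c → ℂ) (a b : ℝ) : ℝ :=
  (b - a)⁻¹ * ∫ t in a..b, ‖f (t : 𝕋c) - arcAvg f a b‖ ^ 2

/-- `f ∈ VMO`: `f ∈ L²(𝕋)`, the mean oscillation over all subarcs is bounded, and it
tends to `0` as the length of the arc tends to `0`. -/
def MemVMO (f : 𝕋c → ℂ) : Prop :=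
  MemLp f 2 μT ∧
  (∃ C : ℝ, ∀ a b : ℝ, a < b → b - a ≤ 2 * π → meanOsc f a b ≤ C) ∧
  (∀ ε > 0, ∃ δ > 0, ∀ a b : ℝ, a < b → b - a < δ → meanOsc f a b < ε)

/-- Real-valued elements of `VMO`, `VMO_ℝ`. -/
def MemVMOR (f : 𝕋c → ℂ) : Prop := MemVMO f ∧ RealValued f

/-- `g` is the Hilbert transform of `f`: `g ∈ L²` and the Fourier coefficients of `g`
are `-i·sgn(n)` times those of `f`. -/
def IsHilbertTransform (f g : 𝕋c → ℂ) : Prop :=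
  MemLp g 2 μT ∧ ∀ n : ℤ, fourierCoeff g n = -Complex.I * (Int.sign n : ℂ) * fourierCoeff f n



/-- The essential range of `g` (for real values `λ`). -/
def essRange (g : 𝕋c → ℂ) : Set ℝ :=
  {lam : ℝ | ∀ ε > 0, 0 < μT {t : 𝕋c | ‖g t - (lam : ℂ)‖ < ε}}

lemma circleVol (S : Set 𝕋c) : (volume : Measure 𝕋c) S = ENNReal.ofReal (2*π) * μT S := by
  rw [AddCircle.volume_eq_smul_haarAddCircle, Measure.smul_apply, smul_eq_mul]

lemma strip_measure (S : Set 𝕋c) (hS : NullMeasurableSet S (volume : Measure 𝕋c)) (a : ℝ) :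
    (volume : Measure ℝ) ((((↑) : ℝ → 𝕋c) ⁻¹' S) ∩ Ioc a (a + 2*π)) = (volume : Measure 𝕋c) S := by
  rw [← Measure.restrict_apply' measurableSet_Ioc]
  exact (AddCircle.measurePreserving_mk (2*π) a).measure_preimage hS

lemma nullR {N : Set 𝕋c} (hN : μT N = 0) : (volume : Measure ℝ) {x : ℝ | (x : 𝕋c) ∈ N} = 0 := by
  set M := toMeasurable (volume : Measure 𝕋c) N with hM
  have hMvol : (volume : Measure 𝕋c) M = 0 := by
    rw [measure_toMeasurable, circleVol, hN, mul_zero]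
  have hsub : {x : ℝ | (x : 𝕋c) ∈ N} ⊆ ((↑) : ℝ → 𝕋c) ⁻¹' M :=
    fun x hx => subset_toMeasurable _ _ hx
  refine measure_mono_null hsub ?_
  have hcover : ((↑) : ℝ → 𝕋c) ⁻¹' M ⊆ ⋃ n : ℤ, (((↑) : ℝ → 𝕋c) ⁻¹' M) ∩ Ioc ((0:ℝ) + n • (2*π)) (0 + (n+1) • (2*π)) := by
    intro x hx
    have : x ∈ ⋃ n : ℤ, Ioc ((0:ℝ) + n • (2*π)) (0 + (n+1) • (2*π)) := by
      rw [iUnion_Ioc_add_zsmul (by positivity) 0]; trivial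
    obtain ⟨s, ⟨n, rfl⟩, hxs⟩ := this
    exact mem_iUnion.2 ⟨n, hx, hxs⟩
  refine measure_mono_null hcover (measure_iUnion_null fun n => ?_)
  have : (0:ℝ) + (n+1) • (2*π) = (0 + n • (2*π)) + 2*π := by
    push_cast [zsmul_eq_mul]; ring
  rw [this, strip_measure M (measurableSet_toMeasurable _ _).nullMeasurableSet, hMvol]

lemma aeR {P : 𝕋c → Prop} (hP : ∀ᵐ t ∂μT, P t) : ∀ᵐ x : ℝ, P ↑x := by
  rw [ae_iff] at hP ⊢
  exact nullR hP

lemma posR {S : Set 𝕋c} (hS : MeasurableSet S) (h : 0 < μT S) :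
    0 < (volume : Measure ℝ) ((((↑) : ℝ → 𝕋c) ⁻¹' S) ∩ Ioc 0 (0 + 2*π)) := by
  rw [strip_measure S hS.nullMeasurableSet 0, circleVol]
  exact ENNReal.mul_pos (by simp [ENNReal.ofReal_pos]; positivity) h.ne'

-- integrability transfers
lemma intOnStrip {E : Type*} [NormedAddCommGroup E] {f : 𝕋c → E} (hf : Integrable f μT) (a : ℝ) :
    IntegrableOn (fun x : ℝ => f x) (Ioc a (a + 2*π)) volume := by
  have hf' : Integrable f (volume : Measure 𝕋c) := by
    rw [AddCircle.volume_eq_smul_haarAddCircle]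
    exact hf.smul_measure ENNReal.ofReal_ne_top
  exact ((AddCircle.measurePreserving_mk (2*π) a).integrable_comp hf'.aestronglyMeasurable).2 hf'

lemma intervalIntegrableR {E : Type*} [NormedAddCommGroup E] {f : 𝕋c → E} (hf : Integrable f μT)
    (a b : ℝ) : IntervalIntegrable (fun x : ℝ => f x) volume a b := by
  have key : ∀ n : ℕ, ∀ a : ℝ, IntegrableOn (fun x : ℝ => f x) (Ioc a (a + n * (2*π))) volume := by
    intro n
    induction n with
    | zero => intro a; simp
    | succ n ih =>
      intro a
      have hsub : Ioc a (a + ((n:ℝ)+1) * (2*π)) ⊆ Ioc a (a + (n:ℝ) * (2*π)) ∪ Ioc (a + (n:ℝ) * (2*π)) ((a + (n:ℝ) * (2*π)) + 2*π) := by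
        have h : a + ((n:ℝ)+1) * (2*π) = (a + (n:ℝ) * (2*π)) + 2*π := by ring
        rw [h, Ioc_union_Ioc_eq_Ioc (by nlinarith [Real.pi_pos]) (by nlinarith [Real.pi_pos])]
      have := ((ih a).union (intOnStrip hf (a + (n:ℝ) * (2*π)))).mono_set hsub
      simpa using this
  rw [intervalIntegrable_iff]
  obtain ⟨n, hn⟩ := exists_nat_gt ((max a b - min a b) / (2*π))
  have h2π : (0:ℝ) < 2*π := by positivity
  have : Set.uIoc a b ⊆ Ioc (min a b) (min a b + n * (2*π)) := by
    rw [Set.uIoc]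
    apply Ioc_subset_Ioc le_rfl
    rw [div_lt_iff₀ h2π] at hn
    linarith
  exact (key n (min a b)).mono_set this



section helpers
variable {g : 𝕋c → ℂ}

/-- essRange is nonempty when g is a.e. strongly measurable and real valued. -/
lemma essRange_nonempty (hm : AEStronglyMeasurable g μT) (him : RealValued g) :
    (essRange g).Nonempty := by
  by_contra hempty
  rw [Set.not_nonempty_iff_eq_empty] at hempty
  -- measurable representative
  set g' : 𝕋c → ℂ := hm.mk g with hg'
  have hgg' : g =ᵐ[μT] g' := hm.ae_eq_mk
  set r : 𝕋c → ℝ := fun t => (g' t).re with hr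
  have hrm : Measurable r := Complex.measurable_re.comp hm.stronglyMeasurable_mk.measurable
  set ν : Measure ℝ := μT.map r with hν
  have hae : ∀ᵐ t ∂μT, ∀ lam : ℝ, ∀ ε : ℝ, (|r t - lam| < ε ↔ ‖g t - (lam:ℂ)‖ < ε) := by
    filter_upwards [hgg', him] with t h1 h2 lam ε
    have : g t - (lam:ℂ) = ((r t - lam : ℝ) : ℂ) := by
      rw [hr]
      apply Complex.ext <;> simp [← h1, h2]
    rw [this, Complex.norm_real, Real.norm_eq_abs]
  have key : ∀ lam : ℝ, ∃ ε > 0, ν (Metric.ball lam ε) = 0 := by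
    intro lam
    have : lam ∉ essRange g := by rw [hempty]; exact notMem_empty lam
    simp only [essRange, mem_setOf_eq, not_forall] at this
    obtain ⟨ε, hε, hco⟩ := this
    refine ⟨ε, hε, ?_⟩
    rw [hν, Measure.map_apply hrm measurableSet_ball]
    have : r ⁻¹' Metric.ball lam ε =ᵐ[μT] {t : 𝕋c | ‖g t - (lam:ℂ)‖ < ε} := by
      filter_upwards [hae] with t ht
      simp only [mem_preimage, Metric.mem_ball, Real.dist_eq, mem_setOf_eq, eq_iff_iff]
      exact ht lam ε
    rw [measure_congr this]
    exact le_antisymm (not_lt.1 hco) zero_le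
  have hν0 : ν univ = 0 := by
    refine measure_null_of_locally_null univ fun x _ => ?_
    obtain ⟨ε, hε, h0⟩ := key x
    exact ⟨Metric.ball x ε, by simpa using Metric.ball_mem_nhds x hε, h0⟩
  rw [hν, Measure.map_apply hrm MeasurableSet.univ, preimage_univ] at hν0
  simp at hν0

lemma normsq_integrable (hL2 : MemLp g 2 μT) (w : ℂ) :
    Integrable (fun t : 𝕋c => ‖g t - w‖ ^ 2) μT := by
  have h := (hL2.sub (memLp_const w)).integrable_norm_rpow two_ne_zero ENNReal.ofNat_ne_top
  have h2 : ((2:ENNReal)).toReal = ((2:ℕ):ℝ) := by norm_num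
  rw [h2] at h
  simpa [Real.rpow_natCast] using h

end helpers


set_option maxHeartbeats 1000000
section main
variable {g : 𝕋c → ℂ}

lemma mid (hg : MemVMOR g) {l1 l2 c : ℝ} (h1 : l1 ∈ essRange g) (h2 : l2 ∈ essRange g)
    (hc1 : l1 < c) (hc2 : c < l2) : c ∈ essRange g := by
  obtain ⟨⟨hL2, _hbdd, hVMO⟩, him⟩ := hg
  by_contra hcon
  simp only [essRange, mem_setOf_eq, not_forall] at hcon
  obtain ⟨ε0, hε0, hnull0⟩ := hcon
  have hμ0 : μT {t : 𝕋c | ‖g t - (c:ℂ)‖ < ε0} = 0 :=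
    le_antisymm (not_lt.1 hnull0) zero_le
  obtain ⟨ε, hεpos, hεle0, hε1, hε2⟩ : ∃ ε : ℝ, 0 < ε ∧ ε ≤ ε0 ∧ ε < c - l1 ∧ ε < l2 - c :=
    ⟨min ε0 (min ((c - l1)/2) ((l2 - c)/2)), lt_min hε0 (lt_min (by linarith) (by linarith)),
      min_le_left _ _,
      lt_of_le_of_lt (le_trans (min_le_right _ _) (min_le_left _ _)) (by linarith),
      lt_of_le_of_lt (le_trans (min_le_right _ _) (min_le_right _ _)) (by linarith)⟩
  have hnull : μT {t : 𝕋c | ‖g t - (c:ℂ)‖ < ε} = 0 :=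
    measure_mono_null (fun t ht => lt_of_lt_of_le ht hεle0) hμ0
  -- measurable representative
  set g' : 𝕋c → ℂ := hL2.1.mk g with hg'def
  have hgg' : g =ᵐ[μT] g' := hL2.1.ae_eq_mk
  have hg'm : Measurable g' := hL2.1.stronglyMeasurable_mk.measurable
  -- sets on the circle
  set SA : Set 𝕋c := {t | (g' t).re ≤ c - ε} with hSAdef
  set SB : Set 𝕋c := {t | c + ε ≤ (g' t).re} with hSBdef
  have hSAm : MeasurableSet SA := measurableSet_le (Complex.measurable_re.comp hg'm) measurable_const
  have hSBm : MeasurableSet SB := measurableSet_le measurable_const (Complex.measurable_re.comp hg'm)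
  have hSAp : 0 < μT SA := by
    have hT : 0 < μT {t : 𝕋c | ‖g t - (l1:ℂ)‖ < c - ε - l1} := h1 _ (by linarith)
    refine lt_of_lt_of_le hT (measure_mono_ae ?_)
    filter_upwards [hgg', him] with t heq him' ht
    have ht' : ‖g t - (l1:ℂ)‖ < c - ε - l1 := ht
    show (g' t).re ≤ c - ε
    have hre : |(g t - (l1:ℂ)).re| ≤ ‖g t - (l1:ℂ)‖ := Complex.abs_re_le_norm _
    simp only [Complex.sub_re, Complex.ofReal_re] at hre
    rw [← heq]
    have := lt_of_abs_lt (lt_of_le_of_lt hre ht')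
    linarith
  have hSBp : 0 < μT SB := by
    have hT : 0 < μT {t : 𝕋c | ‖g t - (l2:ℂ)‖ < l2 - c - ε} := h2 _ (by linarith)
    refine lt_of_lt_of_le hT (measure_mono_ae ?_)
    filter_upwards [hgg', him] with t heq him' ht
    have ht' : ‖g t - (l2:ℂ)‖ < l2 - c - ε := ht
    show c + ε ≤ (g' t).re
    have hre : |(g t - (l2:ℂ)).re| ≤ ‖g t - (l2:ℂ)‖ := Complex.abs_re_le_norm _
    simp only [Complex.sub_re, Complex.ofReal_re] at hre
    rw [← heq]
    have := neg_lt_of_abs_lt (lt_of_le_of_lt hre ht')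
    linarith
  -- sets on ℝ
  set A : Set ℝ := ((↑) : ℝ → 𝕋c) ⁻¹' SA with hAdef
  set B : Set ℝ := ((↑) : ℝ → 𝕋c) ⁻¹' SB with hBdef
  have hAm : MeasurableSet A := hSAm.preimage AddCircle.measurable_mk'
  have hBm : MeasurableSet B := hSBm.preimage AddCircle.measurable_mk'
  have hAp : 0 < (volume : Measure ℝ) A :=
    lt_of_lt_of_le (posR hSAm hSAp) (measure_mono inter_subset_left)
  have hBp : 0 < (volume : Measure ℝ) B :=
    lt_of_lt_of_le (posR hSBm hSBp) (measure_mono inter_subset_left)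
  -- the global a.e. statement on ℝ
  have haeℝ : ∀ᵐ x : ℝ, g ↑x = g' ↑x ∧ (g ↑x).im = 0 ∧ ε ≤ ‖g ↑x - (c:ℂ)‖ := by
    apply aeR (P := fun t => g t = g' t ∧ (g t).im = 0 ∧ ε ≤ ‖g t - (c:ℂ)‖)
    have h3 : ∀ᵐ t ∂μT, ε ≤ ‖g t - (c:ℂ)‖ := by
      rw [ae_iff]; push_neg
      simpa [not_le] using hnull
    filter_upwards [hgg', him, h3] with t a b c; exact ⟨a, b, c⟩
  -- integrability on ℝ
  set G : ℝ → ℂ := fun x => g ↑x with hGdef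
  have hgint : Integrable g μT := hL2.integrable one_le_two
  have hGint : ∀ a b : ℝ, IntervalIntegrable G volume a b := fun a b => intervalIntegrableR hgint a b
  have hsqint : ∀ (w : ℂ) (a b : ℝ),
      IntervalIntegrable (fun x : ℝ => ‖G x - w‖ ^ 2) volume a b := fun w a b =>
    intervalIntegrableR (normsq_integrable hL2 w) a b
  -- VMO smallness
  obtain ⟨δ, hδpos, hδosc⟩ := hVMO (ε^2/8) (by positivity)
  -- density points
  have hdens : ∀ S : Set ℝ, MeasurableSet S → 0 < (volume : Measure ℝ) S → ∃ x : ℝ,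
      Filter.Tendsto (fun r => volume (S ∩ Metric.closedBall x r) / volume (Metric.closedBall x r))
        (nhdsWithin 0 (Ioi 0)) (nhds 1) := by
    intro S hSm hSp
    have hbes := Besicovitch.ae_tendsto_measure_inter_div (volume : Measure ℝ) S
    have hne : (volume : Measure ℝ).restrict S ≠ 0 := by
      simp only [ne_eq, ← Measure.measure_univ_eq_zero, Measure.restrict_apply_univ]
      exact hSp.ne'
    haveI : Filter.NeBot (ae ((volume : Measure ℝ).restrict S)) := ae_neBot.mpr hne
    exact hbes.exists
  obtain ⟨xA, hxA⟩ := hdens A hAm hAp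
  obtain ⟨xB, hxB⟩ := hdens B hBm hBp
  obtain ⟨rad, hrad0, hradδ, hdA, hdB⟩ :
      ∃ rad : ℝ, 0 < rad ∧ rad < δ/2 ∧
        (3/4 : ENNReal) < volume (A ∩ Metric.closedBall xA rad) / volume (Metric.closedBall xA rad) ∧
        (3/4 : ENNReal) < volume (B ∩ Metric.closedBall xB rad) / volume (Metric.closedBall xB rad) := by
    have h341 : (3/4 : ENNReal) < 1 := by
      rw [ENNReal.div_lt_iff (by norm_num) (by norm_num)]; norm_num
    have e1 : ∀ᶠ rad in nhdsWithin (0:ℝ) (Ioi 0), 0 < rad :=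
      eventually_mem_nhdsWithin.mono fun r hr => hr
    have e2 : ∀ᶠ rad in nhdsWithin (0:ℝ) (Ioi 0), rad < δ/2 :=
      (eventually_lt_nhds (by linarith : (0:ℝ) < δ/2)).filter_mono nhdsWithin_le_nhds
    have e3 := hxA.eventually (eventually_gt_nhds h341)
    have e4 := hxB.eventually (eventually_gt_nhds h341)
    obtain ⟨rad, hr1, hr2, hr3, hr4⟩ := (e1.and (e2.and (e3.and e4))).exists
    exact ⟨rad, hr1, hr2, hr3, hr4⟩
  -- density lower bound on Ioc arcs
  have hdense_bound : ∀ (S : Set ℝ) (x : ℝ),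
      (3/4 : ENNReal) < volume (S ∩ Metric.closedBall x rad) / volume (Metric.closedBall x rad) →
      (3/2) * rad ≤ (volume (S ∩ Ioc (x - rad) (x + rad))).toReal := by
    intro S x hd
    have hcb : Metric.closedBall x rad = Icc (x - rad) (x + rad) := Real.closedBall_eq_Icc
    have hvcb : volume (Metric.closedBall x rad) = ENNReal.ofReal (2 * rad) := by
      rw [hcb, Real.volume_Icc]; congr 1; ring
    have hb0 : volume (Metric.closedBall x rad) ≠ 0 := by
      rw [hvcb]; simp only [ne_eq, ENNReal.ofReal_eq_zero, not_le]; linarith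
    have hbt : volume (Metric.closedBall x rad) ≠ ⊤ := by rw [hvcb]; exact ENNReal.ofReal_ne_top
    have hmul := (ENNReal.lt_div_iff_mul_lt (Or.inl hb0) (Or.inl hbt)).1 hd
    have hsub : S ∩ Metric.closedBall x rad ⊆ (S ∩ Ioc (x - rad) (x + rad)) ∪ {x - rad} := by
      rintro y ⟨hyS, hy⟩
      rw [hcb] at hy
      rcases eq_or_lt_of_le hy.1 with h | h
      · exact Or.inr (by simp [← h])
      · exact Or.inl ⟨hyS, h, hy.2⟩
    have hm1 : volume (S ∩ Metric.closedBall x rad) ≤ volume (S ∩ Ioc (x - rad) (x + rad)) := by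
      refine le_trans (measure_mono hsub) (le_trans (measure_union_le _ _) ?_)
      simp
    have hofr : (3/4 : ENNReal) * volume (Metric.closedBall x rad) = ENNReal.ofReal ((3/2) * rad) := by
      rw [hvcb]
      have : (3/4 : ENNReal) = ENNReal.ofReal (3/4) := by
        rw [ENNReal.ofReal_div_of_pos (by norm_num)]; norm_num [ENNReal.ofReal_ofNat]
      rw [this, ← ENNReal.ofReal_mul (by norm_num)]
      congr 1; ring
    have hle : ENNReal.ofReal ((3/2) * rad) ≤ volume (S ∩ Ioc (x - rad) (x + rad)) := by
      rw [← hofr]; exact le_trans hmul.le hm1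
    have hfin : volume (S ∩ Ioc (x - rad) (x + rad)) ≠ ⊤ := by
      refine ne_top_of_le_ne_top ?_ (measure_mono inter_subset_right)
      rw [Real.volume_Ioc]; exact ENNReal.ofReal_ne_top
    exact (ENNReal.ofReal_le_iff_le_toReal hfin).1 hle
  -- the averaging function and its continuity
  set F : ℝ → ℝ := fun s => (arcAvg g (s - rad) (s + rad)).re with hFdef
  have hFeq : ∀ s : ℝ, arcAvg g (s - rad) (s + rad)
      = (2*rad)⁻¹ • ((∫ x in (0:ℝ)..(s+rad), g ↑x) - ∫ x in (0:ℝ)..(s-rad), g ↑x) := by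
    intro s
    simp only [arcAvg]
    rw [intervalIntegral.integral_interval_sub_left (hGint 0 (s+rad)) (hGint 0 (s-rad))]
    congr 1
    rw [show s + rad - (s - rad) = 2*rad by ring]
  have hFcont : Continuous F := by
    have hP : Continuous fun u : ℝ => ∫ x in (0:ℝ)..u, g ↑x :=
      intervalIntegral.continuous_primitive hGint 0
    have hC : Continuous fun s : ℝ => arcAvg g (s - rad) (s + rad) := by
      simp only [hFeq]
      exact (continuous_const : Continuous fun _ : ℝ => ((2*rad)⁻¹ : ℝ)).smul ((hP.comp (continuous_id.add continuous_const)).sub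
        (hP.comp (continuous_id.sub continuous_const)))
    exact Complex.continuous_re.comp hC
  -- mean oscillation over arcs of length 2 rad
  have hIeq : ∀ s : ℝ, (∫ x in Ioc (s - rad) (s + rad), ‖g ↑x - arcAvg g (s - rad) (s + rad)‖^2)
      = 2*rad * meanOsc g (s - rad) (s + rad) := by
    intro s
    simp only [meanOsc]
    rw [intervalIntegral.integral_of_le (by linarith : s - rad ≤ s + rad)]
    rw [show s + rad - (s - rad) = 2*rad by ring, ← mul_assoc,
      mul_inv_cancel₀ (by positivity : (2*rad : ℝ) ≠ 0), one_mul]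
  have hIub : ∀ s : ℝ, (∫ x in Ioc (s - rad) (s + rad), ‖g ↑x - arcAvg g (s - rad) (s + rad)‖^2)
      < 2*rad * (ε^2/8) := by
    intro s
    rw [hIeq s]
    have := hδosc (s - rad) (s + rad) (by linarith) (by rw [show s + rad - (s - rad) = 2*rad by ring]; linarith)
    exact mul_lt_mul_of_pos_left this (by positivity)
  -- the band estimate: F never enters the middle band
  have hband : ∀ s : ℝ, ε/2 ≤ |F s - c| := by
    intro s
    by_contra hb
    push_neg at hb
    have hae' : ∀ᵐ (x : ℝ) ∂((volume : Measure ℝ).restrict (Ioc (s-rad) (s+rad))),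
        ε/2 ≤ ‖g ↑x - arcAvg g (s - rad) (s + rad)‖ := by
      filter_upwards [ae_restrict_of_ae haeℝ] with x hx
      obtain ⟨hx1, hx2, hx3⟩ := hx
      have h1 : ‖g (↑x : 𝕋c) - (c:ℂ)‖ = |(g (↑x : 𝕋c)).re - c| := by
        have : g (↑x : 𝕋c) - (c:ℂ) = (((g (↑x : 𝕋c)).re - c : ℝ) : ℂ) :=
          Complex.ext (by simp) (by simp [hx2])
        rw [this, Complex.norm_real, Real.norm_eq_abs]
      have h3 : |(g (↑x : 𝕋c)).re - (arcAvg g (s - rad) (s + rad)).re|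
          ≤ ‖g ↑x - arcAvg g (s - rad) (s + rad)‖ := by
        have := Complex.abs_re_le_norm (g ↑x - arcAvg g (s - rad) (s + rad))
        simpa [Complex.sub_re] using this
      have h2 : |(g (↑x : 𝕋c)).re - c| - |(arcAvg g (s - rad) (s + rad)).re - c|
          ≤ |(g (↑x : 𝕋c)).re - (arcAvg g (s - rad) (s + rad)).re| := by
        have := abs_sub_abs_le_abs_sub ((g (↑x : 𝕋c)).re - c) ((arcAvg g (s - rad) (s + rad)).re - c)
        simpa using this
      have hFs : |(arcAvg g (s - rad) (s + rad)).re - c| < ε/2 := hb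
      rw [h1] at hx3
      linarith
    have hlow : (ε/2)^2 * (2*rad) ≤ ∫ x in Ioc (s-rad) (s+rad), ‖g ↑x - arcAvg g (s - rad) (s + rad)‖^2 := by
      have hint : IntegrableOn (fun x : ℝ => ‖g ↑x - arcAvg g (s - rad) (s + rad)‖^2)
          (Ioc (s-rad) (s+rad)) volume := (hsqint _ _ _).1
      have hfin : volume (Ioc (s-rad) (s+rad)) < ⊤ := by
        rw [Real.volume_Ioc]; exact ENNReal.ofReal_lt_top
      have haebound : (fun _ : ℝ => (ε/2)^2) ≤ᵐ[(volume : Measure ℝ).restrict (Ioc (s-rad) (s+rad))]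
          fun x : ℝ => ‖g ↑x - arcAvg g (s - rad) (s + rad)‖^2 := by
        filter_upwards [hae'] with x hx
        exact pow_le_pow_left₀ (by positivity) hx 2
      have hmono := integral_mono_ae (integrableOn_const (C := (ε/2)^2) hfin.ne : Integrable (fun _ : ℝ => (ε/2)^2) ((volume : Measure ℝ).restrict (Ioc (s-rad) (s+rad)))) hint haebound
      rw [setIntegral_const, measureReal_def, Real.volume_Ioc,
        show s + rad - (s - rad) = 2*rad by ring,
        ENNReal.toReal_ofReal (by positivity : (0:ℝ) ≤ 2*rad), smul_eq_mul] at hmono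
      linarith [hmono]
    have := hIub s
    nlinarith [hrad0, hεpos, sq_nonneg ε]
  -- case analysis: F always low or always high
  have hsplit : ∀ s : ℝ, F s ≤ c - ε/2 ∨ c + ε/2 ≤ F s := by
    intro s
    rcases le_abs.1 (hband s) with h | h
    · right; linarith
    · left; linarith
  have hcase : (∀ s : ℝ, F s ≤ c - ε/2) ∨ (∀ s : ℝ, c + ε/2 ≤ F s) := by
    by_contra hboth
    push_neg at hboth
    obtain ⟨⟨s1, hs1⟩, s2, hs2⟩ := hboth
    have h1 : c + ε/2 ≤ F s1 := (hsplit s1).resolve_left (by linarith)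
    have h2 : F s2 ≤ c - ε/2 := (hsplit s2).resolve_right (by linarith)
    have hmem : c ∈ uIcc (F s2) (F s1) := by
      rw [mem_uIcc]; left; constructor <;> linarith
    obtain ⟨s0, _, hs0⟩ := intermediate_value_uIcc hFcont.continuousOn hmem
    have := hband s0
    rw [hs0] at this
    simp at this
    linarith
  -- the final contradiction machine
  have final : ∀ (S : Set ℝ) (x : ℝ), MeasurableSet S →
      (3/2) * rad ≤ (volume (S ∩ Ioc (x - rad) (x + rad))).toReal →
      (∀ᵐ (y : ℝ) ∂((volume : Measure ℝ).restrict (S ∩ Ioc (x - rad) (x + rad))),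
        ε ≤ ‖g ↑y - arcAvg g (x - rad) (x + rad)‖) →
      False := by
    intro S x hSm hvol hae'
    have hTm : MeasurableSet (S ∩ Ioc (x - rad) (x + rad)) := hSm.inter measurableSet_Ioc
    have hTfin : volume (S ∩ Ioc (x - rad) (x + rad)) < ⊤ :=
      lt_of_le_of_lt (measure_mono inter_subset_right)
        (by rw [Real.volume_Ioc]; exact ENNReal.ofReal_lt_top)
    have hint : IntegrableOn (fun y : ℝ => ‖g ↑y - arcAvg g (x - rad) (x + rad)‖^2)
        (Ioc (x-rad) (x+rad)) volume := (hsqint _ _ _).1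
    have hintT : IntegrableOn (fun y : ℝ => ‖g ↑y - arcAvg g (x - rad) (x + rad)‖^2)
        (S ∩ Ioc (x - rad) (x + rad)) volume := hint.mono_set inter_subset_right
    have h1 : ε^2 * (volume (S ∩ Ioc (x - rad) (x + rad))).toReal
        ≤ ∫ y in S ∩ Ioc (x - rad) (x + rad), ‖g ↑y - arcAvg g (x - rad) (x + rad)‖^2 := by
      have haebound : (fun _ : ℝ => ε^2) ≤ᵐ[(volume : Measure ℝ).restrict (S ∩ Ioc (x - rad) (x + rad))]
          fun y : ℝ => ‖g ↑y - arcAvg g (x - rad) (x + rad)‖^2 := by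
        filter_upwards [hae'] with y hy
        exact pow_le_pow_left₀ hεpos.le hy 2
      have hmono := integral_mono_ae (integrableOn_const (C := ε^2) hTfin.ne) hintT haebound
      rw [setIntegral_const, measureReal_def, smul_eq_mul] at hmono
      linarith [hmono]
    have h2 : (∫ y in S ∩ Ioc (x - rad) (x + rad), ‖g ↑y - arcAvg g (x - rad) (x + rad)‖^2)
        ≤ ∫ y in Ioc (x-rad) (x+rad), ‖g ↑y - arcAvg g (x - rad) (x + rad)‖^2 :=
      setIntegral_mono_set hint (Filter.Eventually.of_forall fun y => sq_nonneg _)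
        (HasSubset.Subset.eventuallyLE inter_subset_right)
    have h3 := hIub x
    have h4 : ε^2 * ((3/2)*rad) ≤ ε^2 * (volume (S ∩ Ioc (x - rad) (x + rad))).toReal :=
      mul_le_mul_of_nonneg_left hvol (sq_nonneg ε)
    nlinarith [mul_pos (mul_pos hεpos hεpos) hrad0]
  rcases hcase with hlo | hhi
  · -- F always ≤ c - ε/2; contradiction at a density point of B
    refine final B xB hBm (hdense_bound B xB hdB) ?_
    have hTm : MeasurableSet (B ∩ Ioc (xB - rad) (xB + rad)) := hBm.inter measurableSet_Ioc
    filter_upwards [ae_restrict_of_ae haeℝ, ae_restrict_mem hTm] with y hy hyT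
    obtain ⟨hy1, hy2, _⟩ := hy
    have hyB : c + ε ≤ (g (↑y : 𝕋c)).re := by
      have : c + ε ≤ (g' (↑y : 𝕋c)).re := hyT.1
      rw [hy1]; exact this
    have hw : (arcAvg g (xB - rad) (xB + rad)).re ≤ c - ε/2 := hlo xB
    have h3 : |(g (↑y : 𝕋c)).re - (arcAvg g (xB - rad) (xB + rad)).re|
        ≤ ‖g ↑y - arcAvg g (xB - rad) (xB + rad)‖ := by
      have := Complex.abs_re_le_norm (g ↑y - arcAvg g (xB - rad) (xB + rad))
      simpa [Complex.sub_re] using this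
    have habs : (g (↑y : 𝕋c)).re - (arcAvg g (xB - rad) (xB + rad)).re
        ≤ |(g (↑y : 𝕋c)).re - (arcAvg g (xB - rad) (xB + rad)).re| := le_abs_self _
    linarith
  · -- F always ≥ c + ε/2; contradiction at a density point of A
    refine final A xA hAm (hdense_bound A xA hdA) ?_
    have hTm : MeasurableSet (A ∩ Ioc (xA - rad) (xA + rad)) := hAm.inter measurableSet_Ioc
    filter_upwards [ae_restrict_of_ae haeℝ, ae_restrict_mem hTm] with y hy hyT
    obtain ⟨hy1, hy2, _⟩ := hy
    have hyA : (g (↑y : 𝕋c)).re ≤ c - ε := by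
      have : (g' (↑y : 𝕋c)).re ≤ c - ε := hyT.1
      rw [hy1]; exact this
    have hw : c + ε/2 ≤ (arcAvg g (xA - rad) (xA + rad)).re := hhi xA
    have h3 : |(g (↑y : 𝕋c)).re - (arcAvg g (xA - rad) (xA + rad)).re|
        ≤ ‖g ↑y - arcAvg g (xA - rad) (xA + rad)‖ := by
      have := Complex.abs_re_le_norm (g ↑y - arcAvg g (xA - rad) (xA + rad))
      simpa [Complex.sub_re] using this
    have habs : -((g (↑y : 𝕋c)).re - (arcAvg g (xA - rad) (xA + rad)).re)
        ≤ |(g (↑y : 𝕋c)).re - (arcAvg g (xA - rad) (xA + rad)).re| := neg_le_abs _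
    linarith

end main


/-- If `g ∈ VMO_ℝ` then the essential range of `g` is a connected
subset of `ℝ`. -/
theorem statement11 (g : 𝕋c → ℂ) (hg : MemVMOR g) : IsConnected (essRange g) := by
  constructor
  · exact essRange_nonempty hg.1.1.1 hg.2
  · refine Set.OrdConnected.isPreconnected ?_
    constructor
    intro x hx y hy z hz
    rcases eq_or_lt_of_le hz.1 with rfl | hlt1
    · exact hx
    rcases eq_or_lt_of_le hz.2 with rfl | hlt2
    · exact hy
    exact mid hg hx hy hlt1 hlt2
end
end

section
/- If f ∈ VMO_ℝ and f is integer valued (f(e^{it}) ∈ ℤ for almost every e^{it} ∈ 𝕋), then f is constant almost everywhere on 𝕋. -/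
open MeasureTheory Complex Real Set

noncomputable section

lemma null_pullback {S : Set 𝕋c} (hS : μT S = 0) :
    (volume : Measure ℝ) (((↑) : ℝ → 𝕋c) ⁻¹' S) = 0 := by
  have hvol : (volume : Measure 𝕋c) S = 0 := by
    rw [AddCircle.volume_eq_smul_haarAddCircle, Measure.smul_apply, hS]
    simp
  have hcov : (((↑) : ℝ → 𝕋c) ⁻¹' S) =
      ⋃ n : ℤ, (((↑) : ℝ → 𝕋c) ⁻¹' S) ∩ Ioc (n • (2 * π)) ((n + 1) • (2 * π)) := by
    rw [← inter_iUnion, iUnion_Ioc_zsmul (by positivity), inter_univ]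
  rw [hcov]
  refine measure_iUnion_null fun n => ?_
  have hmp := AddCircle.measurePreserving_mk (2 * π) ((n : ℤ) • (2 * π))
  have h0 : volume.restrict (Ioc ((n : ℤ) • (2 * π)) ((n : ℤ) • (2 * π) + 2 * π))
      ((((↑) : ℝ → 𝕋c)) ⁻¹' S) = 0 :=
    hmp.quasiMeasurePreserving.preimage_null hvol
  rw [Measure.restrict_apply' measurableSet_Ioc] at h0
  have he : (n + 1) • (2 * π) = (n : ℤ) • (2 * π) + 2 * π := by
    rw [add_zsmul, one_zsmul]
  rw [he]
  exact h0

/-- If `f ∈ VMO_ℝ` is integer valued (a.e.), then `f` is constant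
almost everywhere on `𝕋`. -/
theorem statement12 (f : 𝕋c → ℂ) (hf : MemVMOR f)
    (hint : ∀ᵐ t ∂μT, ∃ k : ℤ, f t = (k : ℂ)) :
    ∃ c : ℂ, f =ᵐ[μT] fun _ => c := by
  obtain ⟨⟨hL2, _hbdd, hsmall⟩, _⟩ := hf
  set F : ℝ → ℂ := fun t => f ↑t with hFdef
  -- integer-valuedness pulled back to ℝ
  have hF_int : ∀ᵐ t : ℝ, ∃ k : ℤ, F t = (k : ℂ) := by
    rw [ae_iff]
    exact null_pullback (ae_iff.mp hint)
  -- L² on long intervals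
  have hF2 : ∀ a : ℝ, MemLp F 2 (volume.restrict (Ioc a (a + 2 * π))) := by
    intro a
    have h1 : MemLp f 2 (volume : Measure 𝕋c) := by
      rw [AddCircle.volume_eq_smul_haarAddCircle]
      exact hL2.smul_measure ENNReal.ofReal_ne_top
    exact h1.comp_measurePreserving (AddCircle.measurePreserving_mk (2 * π) a)
  have key : ∀ ε : ℝ, 0 < ε → ε ≤ 1 / 100 → ∃ k : ℤ,
      volume ({t : ℝ | F t ≠ (k : ℂ)} ∩ Ioc 0 (2 * π)) ≤ ENNReal.ofReal (80 * ε) := by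
    intro ε hε hε100
    obtain ⟨δ, hδ, hδ2⟩ := hsmall ε hε
    set h : ℝ := min (δ / 2) π with hhdef
    have hh0 : 0 < h := lt_min (by linarith) Real.pi_pos
    have hhδ : h < δ := lt_of_le_of_lt (min_le_left _ _) (by linarith)
    have hhπ : h ≤ π := min_le_right _ _
    -- Step A: on any arc of length h there is an integer attained off a small set
    have stepA : ∀ a : ℝ, ∃ k : ℤ,
        volume ({t : ℝ | F t ≠ (k : ℂ)} ∩ Ioc a (a + h)) ≤ ENNReal.ofReal (4 * ε * h) := by
      intro a
      set c : ℂ := arcAvg f a (a + h) with hc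
      refine ⟨round c.re, ?_⟩
      have hF2ab : MemLp F 2 (volume.restrict (Ioc a (a + h))) := (hF2 a).mono_measure
        (Measure.restrict_mono (Ioc_subset_Ioc_right (by linarith [Real.pi_pos])) le_rfl)
      have hint2 : Integrable (fun t => ‖F t - c‖ ^ 2) (volume.restrict (Ioc a (a + h))) := by
        have h1 : MemLp (fun t => F t - c) 2 (volume.restrict (Ioc a (a + h))) :=
          hF2ab.sub (memLp_const c)
        have h2 := h1.integrable_norm_rpow (by norm_num) (by norm_num)
        simpa using h2
      have hnn : 0 ≤ᵐ[volume.restrict (Ioc a (a + h))] fun t => ‖F t - c‖ ^ 2 :=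
        Filter.Eventually.of_forall fun t => by positivity
      have hlin : ∫⁻ t, ENNReal.ofReal (‖F t - c‖ ^ 2) ∂(volume.restrict (Ioc a (a + h))) =
          ENNReal.ofReal (∫ t, ‖F t - c‖ ^ 2 ∂(volume.restrict (Ioc a (a + h)))) :=
        (MeasureTheory.ofReal_integral_eq_lintegral_ofReal hint2 hnn).symm
      have hintle : ∫ t, ‖F t - c‖ ^ 2 ∂(volume.restrict (Ioc a (a + h))) ≤ h * ε := by
        have hosc : meanOsc f a (a + h) < ε := hδ2 a (a + h) (by linarith) (by linarith)
        have e1 : ∫ t, ‖F t - c‖ ^ 2 ∂(volume.restrict (Ioc a (a + h))) =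
            h * meanOsc f a (a + h) := by
          rw [meanOsc, add_sub_cancel_left, ← mul_assoc, mul_inv_cancel₀ (ne_of_gt hh0), one_mul,
            intervalIntegral.integral_of_le (by linarith : a ≤ a + h), ← hc]
        rw [e1]
        nlinarith [hh0]
      have hae : AEMeasurable (fun t => ENNReal.ofReal (‖F t - c‖ ^ 2))
          (volume.restrict (Ioc a (a + h))) := hint2.aemeasurable.ennreal_ofReal
      have cheb := mul_meas_ge_le_lintegral₀ hae (ENNReal.ofReal (1 / 4))
      have hsubset : {t : ℝ | F t ≠ ((round c.re : ℤ) : ℂ)} ≤ᵐ[volume.restrict (Ioc a (a + h))]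
          {t : ℝ | ENNReal.ofReal (1 / 4) ≤ ENNReal.ofReal (‖F t - c‖ ^ 2)} := by
        filter_upwards [ae_restrict_of_ae hF_int] with t ht htk
        obtain ⟨j, hj⟩ := ht
        have hjk : j ≠ round c.re := by
          intro hcon
          exact htk (by rw [hj, hcon])
        have h1 : (1 : ℝ) ≤ |(j : ℝ) - ((round c.re : ℤ) : ℝ)| := by
          have h1' : (1 : ℤ) ≤ |j - round c.re| := Int.one_le_abs (sub_ne_zero.mpr hjk)
          have h1'' : ((1 : ℤ) : ℝ) ≤ ((|j - round c.re| : ℤ) : ℝ) := by exact_mod_cast h1'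
          push_cast at h1''
          simpa using h1''
        have h2 : |c.re - ((round c.re : ℤ) : ℝ)| ≤ 1 / 2 := abs_sub_round c.re
        have htri : |(j : ℝ) - ((round c.re : ℤ) : ℝ)| ≤ |(j : ℝ) - c.re| + |c.re - ((round c.re : ℤ) : ℝ)| :=
          abs_sub_le _ _ _
        have h3 : (1 / 2 : ℝ) ≤ ‖F t - c‖ := by
          have hre : (F t - c).re = (j : ℝ) - c.re := by rw [hj]; simp
          have h4 : |(F t - c).re| ≤ ‖F t - c‖ := Complex.abs_re_le_norm _
          rw [hre] at h4
          linarith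
        exact ENNReal.ofReal_le_ofReal (by nlinarith)
      have hmeq : volume ({t : ℝ | F t ≠ ((round c.re : ℤ) : ℂ)} ∩ Ioc a (a + h)) =
          (volume.restrict (Ioc a (a + h))) {t : ℝ | F t ≠ ((round c.re : ℤ) : ℂ)} :=
        (Measure.restrict_apply' measurableSet_Ioc).symm
      rw [hmeq]
      have hle1 := measure_mono_ae hsubset
      have hle2 : ENNReal.ofReal (1 / 4) *
          (volume.restrict (Ioc a (a + h))) {t : ℝ | F t ≠ ((round c.re : ℤ) : ℂ)} ≤
          ENNReal.ofReal (h * ε) := by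
        refine le_trans (mul_le_mul_right hle1 _) (cheb.trans ?_)
        rw [hlin]
        exact ENNReal.ofReal_le_ofReal hintle
      have h14 : (ENNReal.ofReal (1 / 4)) ≠ 0 := by simp
      rw [← ENNReal.mul_le_mul_iff_right h14 ENNReal.ofReal_ne_top]
      refine hle2.trans ?_
      rw [← ENNReal.ofReal_mul (by norm_num : (0 : ℝ) ≤ 1 / 4)]
      exact ENNReal.ofReal_le_ofReal (le_of_eq (by ring))
    choose kf hkf using stepA
    have h4εh : (0 : ℝ) ≤ 4 * ε * h := by nlinarith
    have hstep : ∀ a : ℝ, kf (a + h / 2) = kf a := by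
      intro a
      by_contra hne
      have hsub2 : Ioc (a + h / 2) (a + h) ⊆
          ({t : ℝ | F t ≠ (kf a : ℂ)} ∩ Ioc a (a + h)) ∪
          ({t : ℝ | F t ≠ (kf (a + h / 2) : ℂ)} ∩ Ioc (a + h / 2) (a + h / 2 + h)) := by
        intro t ht
        rcases eq_or_ne (F t) (kf a : ℂ) with h1 | h1
        · refine Or.inr ⟨?_, ht.1, by linarith [ht.2]⟩
          rw [Set.mem_setOf_eq, h1]
          intro hcon
          exact hne (by exact_mod_cast hcon.symm)
        · exact Or.inl ⟨h1, by constructor <;> [linarith [ht.1]; exact ht.2]⟩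
      have hm := ((measure_mono hsub2).trans (measure_union_le _ _)).trans
        (add_le_add (hkf a) (hkf (a + h / 2)))
      rw [Real.volume_Ioc, ← ENNReal.ofReal_add h4εh h4εh,
        ENNReal.ofReal_le_ofReal_iff (by linarith)] at hm
      nlinarith [hh0]
    have hgrid : ∀ n : ℕ, kf ((n : ℝ) * (h / 2)) = kf 0 := by
      intro n
      induction n with
      | zero => norm_num
      | succ m ih =>
        have h1 : ((m + 1 : ℕ) : ℝ) * (h / 2) = (m : ℝ) * (h / 2) + h / 2 := by push_cast; ring
        rw [h1, hstep ((m : ℝ) * (h / 2)), ih]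
    set N : ℕ := ⌈4 * π / h⌉₊ with hN
    have hNle : (N : ℝ) * h ≤ 4 * π + h := by
      have h2 : (N : ℝ) < 4 * π / h + 1 :=
        Nat.ceil_lt_add_one (div_nonneg (by positivity) hh0.le)
      have h3 : (N : ℝ) * h ≤ (4 * π / h + 1) * h := by nlinarith [hh0]
      rw [add_mul, one_mul, div_mul_cancel₀ _ (ne_of_gt hh0)] at h3
      exact h3
    have hNge : 2 * π ≤ (N : ℝ) * (h / 2) := by
      have h2 := Nat.le_ceil (4 * π / h)
      rw [div_le_iff₀ hh0] at h2
      linarith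
    have hcover : Ioc (0 : ℝ) (2 * π) ⊆
        ⋃ j ∈ Finset.range N, Ioc ((j : ℝ) * (h / 2)) ((j : ℝ) * (h / 2) + h) := by
      intro t ht
      have hh2 : (0 : ℝ) < h / 2 := by linarith
      have ht0 : 0 < t / (h / 2) := div_pos ht.1 hh2
      have hm1 : 1 ≤ ⌈t / (h / 2)⌉₊ := Nat.ceil_pos.mpr ht0
      have hub : t / (h / 2) ≤ ((⌈t / (h / 2)⌉₊ : ℕ) : ℝ) := Nat.le_ceil _
      have hlb : ((⌈t / (h / 2)⌉₊ : ℕ) : ℝ) < t / (h / 2) + 1 := Nat.ceil_lt_add_one ht0.le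
      set j : ℕ := ⌈t / (h / 2)⌉₊ - 1 with hj
      have hjm : (j : ℝ) = ((⌈t / (h / 2)⌉₊ : ℕ) : ℝ) - 1 := by
        rw [hj, Nat.cast_sub hm1, Nat.cast_one]
      have hjlt : (j : ℝ) * (h / 2) < t := by
        have h5 : (j : ℝ) < t / (h / 2) := by rw [hjm]; linarith
        have h6 := mul_lt_mul_of_pos_right h5 hh2
        rwa [div_mul_cancel₀ _ (ne_of_gt hh2)] at h6
      have hjub : t ≤ (j : ℝ) * (h / 2) + h := by
        have h6 : t ≤ ((⌈t / (h / 2)⌉₊ : ℕ) : ℝ) * (h / 2) := by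
          have h7 := mul_le_mul_of_nonneg_right hub hh2.le
          rwa [div_mul_cancel₀ _ (ne_of_gt hh2)] at h7
        rw [hjm]
        nlinarith [hh2]
      have hjN : j < N := by
        by_contra hcon
        push_neg at hcon
        have h7 : (N : ℝ) ≤ (j : ℝ) := by exact_mod_cast hcon
        have h8 : (N : ℝ) * (h / 2) ≤ (j : ℝ) * (h / 2) := by nlinarith [hh2]
        linarith [ht.2]
      exact Set.mem_biUnion (Finset.mem_range.mpr hjN) ⟨hjlt, hjub⟩
    refine ⟨kf 0, ?_⟩
    have hsub3 : {t : ℝ | F t ≠ (kf 0 : ℂ)} ∩ Ioc 0 (2 * π) ⊆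
        ⋃ j ∈ Finset.range N,
          ({t : ℝ | F t ≠ (kf 0 : ℂ)} ∩ Ioc ((j : ℝ) * (h / 2)) ((j : ℝ) * (h / 2) + h)) := by
      rintro t ⟨ht1, ht2⟩
      have hmem := hcover ht2
      simp only [Set.mem_iUnion] at hmem ⊢
      obtain ⟨j, hj1, hj2⟩ := hmem
      exact ⟨j, hj1, ht1, hj2⟩
    have hsum : volume ({t : ℝ | F t ≠ (kf 0 : ℂ)} ∩ Ioc 0 (2 * π)) ≤
        ∑ j ∈ Finset.range N,
          volume ({t : ℝ | F t ≠ (kf 0 : ℂ)} ∩ Ioc ((j : ℝ) * (h / 2)) ((j : ℝ) * (h / 2) + h)) :=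
      (measure_mono hsub3).trans (measure_biUnion_finset_le (Finset.range N) _)
    have hterm : ∀ j ∈ Finset.range N,
        volume ({t : ℝ | F t ≠ (kf 0 : ℂ)} ∩ Ioc ((j : ℝ) * (h / 2)) ((j : ℝ) * (h / 2) + h)) ≤
        ENNReal.ofReal (4 * ε * h) := by
      intro j _
      rw [← hgrid j]
      exact hkf _
    have hfin := hsum.trans (Finset.sum_le_sum hterm)
    rw [Finset.sum_const, Finset.card_range, nsmul_eq_mul] at hfin
    refine hfin.trans ?_
    rw [← ENNReal.ofReal_natCast N, ← ENNReal.ofReal_mul (by positivity)]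
    refine ENNReal.ofReal_le_ofReal ?_
    have hπ4 := Real.pi_le_four
    nlinarith [hh0, mul_le_mul_of_nonneg_left hNle (by positivity : (0 : ℝ) ≤ 4 * ε),
      mul_nonneg hε.le (by nlinarith : (0 : ℝ) ≤ 20 - 4 * π - h)]
  -- stabilize the integer as ε → 0
  obtain ⟨k₀, hk₀⟩ := key (1 / 100) (by norm_num) le_rfl
  have hzero : volume ({t : ℝ | F t ≠ (k₀ : ℂ)} ∩ Ioc 0 (2 * π)) = 0 := by
    refine le_antisymm ?_ zero_le
    refine ENNReal.le_of_forall_pos_le_add fun ε hε _ => ?_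
    rw [zero_add]
    have hε' : (0 : ℝ) < (ε : ℝ) := by exact_mod_cast hε
    obtain ⟨k, hk⟩ := key (min ((ε : ℝ) / 80) (1 / 100))
      (lt_min (by positivity) (by norm_num)) (min_le_right _ _)
    have hkk : k = k₀ := by
      by_contra hne
      have hco : Ioc (0 : ℝ) (2 * π) ⊆
          ({t : ℝ | F t ≠ (k : ℂ)} ∩ Ioc 0 (2 * π)) ∪
          ({t : ℝ | F t ≠ (k₀ : ℂ)} ∩ Ioc 0 (2 * π)) := by
        intro t ht
        rcases eq_or_ne (F t) (k : ℂ) with h1 | h1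
        · exact Or.inr ⟨by rw [Set.mem_setOf_eq, h1]; exact fun hc => hne (by exact_mod_cast hc), ht⟩
        · exact Or.inl ⟨h1, ht⟩
      have h2 := ((measure_mono hco).trans (measure_union_le _ _)).trans (add_le_add hk hk₀)
      rw [Real.volume_Ioc, ← ENNReal.ofReal_add (by positivity) (by norm_num),
        ENNReal.ofReal_le_ofReal_iff (by positivity), sub_zero] at h2
      have h3 : min ((ε : ℝ) / 80) (1 / 100) ≤ 1 / 100 := min_le_right _ _
      have hπ := Real.pi_gt_three
      linarith
    rw [hkk] at hk
    refine hk.trans ?_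
    have h4 : (80 : ℝ) * min ((ε : ℝ) / 80) (1 / 100) ≤ (ε : ℝ) := by
      have := min_le_left ((ε : ℝ) / 80) (1 / 100 : ℝ); linarith
    refine (ENNReal.ofReal_le_ofReal h4).trans ?_
    exact le_of_eq ENNReal.ofReal_coe_nnreal
  -- transfer back to the circle
  refine ⟨(k₀ : ℂ), ?_⟩
  obtain ⟨g, hgm, hfg⟩ : ∃ g : 𝕋c → ℂ, StronglyMeasurable g ∧ f =ᵐ[μT] g :=
    ⟨hL2.aestronglyMeasurable.mk f, hL2.aestronglyMeasurable.stronglyMeasurable_mk,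
      hL2.aestronglyMeasurable.ae_eq_mk⟩
  have hfgR : (volume : Measure ℝ) {t : ℝ | ¬ f ↑t = g ↑t} = 0 :=
    null_pullback (ae_iff.mp hfg)
  have hSnull : volume ({t : ℝ | g ↑t ≠ (k₀ : ℂ)} ∩ Ioc 0 (2 * π)) = 0 := by
    refine measure_mono_null ?_ (measure_union_null hzero hfgR)
    rintro t ⟨ht1, ht2⟩
    rcases eq_or_ne (f ↑t) (g ↑t) with h1 | h1
    · exact Or.inl ⟨by simpa [hFdef, h1] using ht1, ht2⟩
    · exact Or.inr h1
  have hSmeas : MeasurableSet {x : 𝕋c | g x ≠ (k₀ : ℂ)} :=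
    (measurableSet_singleton ((k₀ : ℂ))).compl.preimage hgm.measurable
  have hvolS : (volume : Measure 𝕋c) {x : 𝕋c | g x ≠ (k₀ : ℂ)} = 0 := by
    have hmp := AddCircle.measurePreserving_mk (2 * π) 0
    have h5 := hmp.measure_preimage hSmeas.nullMeasurableSet
    rw [← h5, Measure.restrict_apply' measurableSet_Ioc, zero_add]
    exact hSnull
  have hμTS : μT {x : 𝕋c | g x ≠ (k₀ : ℂ)} = 0 := by
    have h2 := hvolS
    rw [AddCircle.volume_eq_smul_haarAddCircle, Measure.smul_apply, smul_eq_mul] at h2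
    rcases mul_eq_zero.mp h2 with h | h
    · rw [ENNReal.ofReal_eq_zero] at h
      linarith [Real.pi_pos]
    · exact h
  refine hfg.trans ?_
  rw [Filter.EventuallyEq, ae_iff]
  exact hμTS
end
end
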